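/- Let κ : ℤ → ℝ be defined by κ(0) = 0 and κ(n) = 1/|n| for n ≠ 0, and let γ denote the Euler–Mascheroni constant. Then for every ρ > 0, the series Σ_{n∈ℤ} [ (ρ² + (x+n)²)^{−1/2} − κ(n) ] converges absolutely for every x ∈ ℝ, and ∫₀¹ Σ_{n∈ℤ} [ (ρ² + (x+n)²)^{−1/2} − κ(n) ] dx = −2·ln(ρ/2) − 2γ. -/

import Mathlib

open Real Filter Finset MeasureTheory Topology



lemma aux_sqrt (ρ t : ℝ) (hρ : 0 < ρ) :
    Real.sqrt (ρ ^ 2 + t ^ 2) = ρ * Real.sqrt (1 + (t / ρ) ^ 2) := by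
  rw [show ρ ^ 2 + t ^ 2 = ρ ^ 2 * (1 + (t / ρ) ^ 2) by field_simp,
    Real.sqrt_mul (by positivity), Real.sqrt_sq hρ.le]

lemma aux_deriv (ρ : ℝ) (hρ : 0 < ρ) (t : ℝ) :
    HasDerivAt (fun s => Real.arsinh (s / ρ)) (1 / Real.sqrt (ρ ^ 2 + t ^ 2)) t := by
  have h := (Real.hasDerivAt_arsinh (t / ρ)).comp t ((hasDerivAt_id t).div_const ρ)
  refine h.congr_deriv ?_
  rw [aux_sqrt ρ t hρ]
  have h1 : (0:ℝ) < Real.sqrt (1 + (t / ρ) ^ 2) := by positivity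
  field_simp

lemma aux_bound (ρ x : ℝ) (hρ : 0 < ρ) (n : ℤ)
    (h1 : 2 * |x| + 2 ≤ |(n : ℝ)|) (h2 : ρ ^ 2 + x ^ 2 ≤ |(n : ℝ)|) :
    abs (1 / Real.sqrt (ρ ^ 2 + (x + n) ^ 2) - 1 / |(n : ℝ)|) ≤ (2 + 3 * |x|) / (n : ℝ) ^ 2 := by
  set b : ℝ := |(n : ℝ)| with hbdef
  have hb : 2 ≤ b := le_trans (by nlinarith [abs_nonneg x]) h1
  have hb0 : 0 < b := by linarith
  set a : ℝ := Real.sqrt (ρ ^ 2 + (x + n) ^ 2) with hadef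
  have ha2 : a ^ 2 = ρ ^ 2 + (x + (n:ℝ)) ^ 2 := Real.sq_sqrt (by positivity)
  have ha0 : 0 < a := Real.sqrt_pos.mpr (by positivity)
  have haxn : |x + (n : ℝ)| ≤ a := by
    rw [hadef, ← Real.sqrt_sq_eq_abs]
    exact Real.sqrt_le_sqrt (by nlinarith)
  have hax : b / 2 ≤ a := by
    have h3 : b ≤ |x + (n : ℝ)| + |x| := by
      calc b = |(x + (n:ℝ)) + (-x)| := by rw [hbdef]; ring_nf
        _ ≤ |x + (n : ℝ)| + |(-x)| := abs_add_le _ _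
        _ = |x + (n : ℝ)| + |x| := by rw [abs_neg]
    linarith
  have hkey : 1 / a - 1 / b = (b ^ 2 - a ^ 2) / (a * b * (a + b)) := by
    field_simp
    ring
  rw [hkey, abs_div]
  have hb2 : b ^ 2 = (n : ℝ) ^ 2 := sq_abs _
  have hnum : |b ^ 2 - a ^ 2| ≤ ρ ^ 2 + x ^ 2 + 2 * |x| * b := by
    rw [ha2, hb2, abs_le]
    constructor <;>
      nlinarith [le_abs_self (x * (n : ℝ)), neg_abs_le (x * (n : ℝ)), abs_mul x (n : ℝ)]
  have hden0 : 0 < a * b * (a + b) := by positivity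
  rw [abs_of_pos hden0]
  have hden : 3 / 4 * b ^ 3 ≤ a * b * (a + b) := by
    have e1 : b/2*(b*(b/2+b)) ≤ b/2*(b*(a+b)) := by
      apply mul_le_mul_of_nonneg_left _ (by positivity)
      exact mul_le_mul_of_nonneg_left (by linarith) hb0.le
    have e2 : b/2*(b*(a+b)) ≤ a*(b*(a+b)) := mul_le_mul_of_nonneg_right hax (by positivity)
    linarith [e1, e2]
  calc |b ^ 2 - a ^ 2| / (a * b * (a + b))
      ≤ (ρ ^ 2 + x ^ 2 + 2 * |x| * b) / (3 / 4 * b ^ 3) :=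
        div_le_div₀ (by positivity) hnum (by positivity) hden
    _ ≤ (2 + 3 * |x|) / b ^ 2 := by
        rw [div_le_div_iff₀ (by positivity) (by positivity)]
        linarith [mul_le_mul_of_nonneg_right h2 (sq_nonneg b), mul_nonneg (abs_nonneg x) (pow_nonneg hb0.le 3), pow_nonneg hb0.le 3, mul_le_mul_of_nonneg_left h2 (mul_nonneg (abs_nonneg x) (sq_nonneg b))]
    _ = (2 + 3 * |x|) / (n : ℝ) ^ 2 := by rw [hb2]



-- outside a finite set, |(n:ℝ)| is at least C
lemma aux_cofinite (C : ℝ) : ∀ᶠ n : ℤ in cofinite, C ≤ |(n : ℝ)| := by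
  rw [Filter.eventually_cofinite]
  apply Set.Finite.subset (Set.finite_Icc (-⌈C⌉) ⌈C⌉)
  intro n hn
  simp only [Set.mem_setOf_eq, not_le] at hn
  rw [Set.mem_Icc, ← abs_le]
  by_contra h
  push_neg at h
  have : (⌈C⌉ : ℝ) < |(n : ℝ)| := by
    calc (⌈C⌉ : ℝ) < (|n| : ℤ) := by exact_mod_cast h
      _ = |(n : ℝ)| := by push_cast [Int.cast_abs]; ring
  linarith [Int.le_ceil C]

lemma aux_summable (κ : ℤ → ℝ) (hκ : ∀ n : ℤ, n ≠ 0 → κ n = 1 / |(n : ℝ)|)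
    (ρ : ℝ) (hρ : 0 < ρ) (x : ℝ) :
    Summable (fun n : ℤ => |1 / Real.sqrt (ρ ^ 2 + (x + n) ^ 2) - κ n|) := by
  apply Summable.of_norm_bounded_eventually (g := fun n : ℤ => (2 + 3 * |x|) * (1 / (n : ℝ) ^ 2))
    ((Real.summable_one_div_int_pow.mpr one_lt_two).mul_left _)
  filter_upwards [aux_cofinite (max (2 * |x| + 2) (ρ ^ 2 + x ^ 2))] with n hn
  have h1 : 2 * |x| + 2 ≤ |(n : ℝ)| := le_trans (le_max_left _ _) hn
  have h2 : ρ ^ 2 + x ^ 2 ≤ |(n : ℝ)| := le_trans (le_max_right _ _) hn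
  have hn0 : n ≠ 0 := by
    intro h; rw [h] at h1; simp at h1; nlinarith [abs_nonneg x]
  rw [Real.norm_eq_abs, abs_abs, hκ n hn0, mul_one_div]
  exact aux_bound ρ x hρ n h1 h2



lemma aux_cont1 (ρ : ℝ) (hρ : 0 < ρ) :
    Continuous (fun x : ℝ => 1 / Real.sqrt (ρ ^ 2 + x ^ 2)) := by
  apply Continuous.div continuous_const
  · exact Real.continuous_sqrt.comp (by continuity)
  · intro x
    exact ne_of_gt (Real.sqrt_pos.mpr (by positivity))

lemma aux_integrable (κ : ℤ → ℝ) (ρ : ℝ) (hρ : 0 < ρ) (n : ℤ) :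
    Integrable (fun x : ℝ => 1 / Real.sqrt (ρ ^ 2 + (x + n) ^ 2) - κ n)
      (volume.restrict (Set.Ioc (0:ℝ) 1)) := by
  have hc : Continuous (fun x : ℝ => 1 / Real.sqrt (ρ ^ 2 + (x + n) ^ 2) - κ n) :=
    ((aux_cont1 ρ hρ).comp (by continuity)).sub continuous_const
  exact hc.integrableOn_Ioc

lemma aux_integral (κ : ℤ → ℝ) (ρ : ℝ) (hρ : 0 < ρ) (n : ℤ) :
    ∫ x in Set.Ioc (0:ℝ) 1, (1 / Real.sqrt (ρ ^ 2 + (x + n) ^ 2) - κ n) =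
      Real.arsinh (((n : ℝ) + 1) / ρ) - Real.arsinh ((n : ℝ) / ρ) - κ n := by
  have hc : Continuous (fun x : ℝ => 1 / Real.sqrt (ρ ^ 2 + (x + n) ^ 2)) :=
    (aux_cont1 ρ hρ).comp (by continuity)
  rw [MeasureTheory.integral_sub (hc.integrableOn_Ioc)
    ((MeasureTheory.integrableOn_const_iff).mpr (Or.inr (by simp [Real.volume_Ioc])))]
  rw [MeasureTheory.setIntegral_const]
  have hvol : volume.real (Set.Ioc (0:ℝ) 1) = 1 := by
    simp [measureReal_def, Real.volume_Ioc]
  rw [hvol, one_smul]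
  congr 1
  rw [← intervalIntegral.integral_of_le zero_le_one,
    intervalIntegral.integral_comp_add_right (fun t => 1 / Real.sqrt (ρ ^ 2 + t ^ 2)) (n : ℝ),
    intervalIntegral.integral_eq_sub_of_hasDerivAt (fun t _ => aux_deriv ρ hρ t)
      ((aux_cont1 ρ hρ).intervalIntegrable _ _)]
  rw [zero_add, add_comm]

lemma aux_summable_int (κ : ℤ → ℝ) (hκ : ∀ n : ℤ, n ≠ 0 → κ n = 1 / |(n : ℝ)|)
    (ρ : ℝ) (hρ : 0 < ρ) :
    Summable (fun n : ℤ =>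
      ∫ x in Set.Ioc (0:ℝ) 1, ‖1 / Real.sqrt (ρ ^ 2 + (x + n) ^ 2) - κ n‖) := by
  apply Summable.of_norm_bounded_eventually (g := fun n : ℤ => 5 * (1 / (n : ℝ) ^ 2))
    ((Real.summable_one_div_int_pow.mpr one_lt_two).mul_left _)
  filter_upwards [aux_cofinite (max 4 (ρ ^ 2 + 1))] with n hn
  have h4 : (4:ℝ) ≤ |(n : ℝ)| := le_trans (le_max_left _ _) hn
  have hρ1 : ρ ^ 2 + 1 ≤ |(n : ℝ)| := le_trans (le_max_right _ _) hn
  have hn0 : n ≠ 0 := by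
    intro h; rw [h] at h4; norm_num at h4
  have hbound : ∀ x ∈ Set.Ioc (0:ℝ) 1,
      ‖1 / Real.sqrt (ρ ^ 2 + (x + n) ^ 2) - κ n‖ ≤ 5 * (1 / (n : ℝ) ^ 2) := by
    intro x hx
    obtain ⟨hx0, hx1⟩ := hx
    have hxabs : |x| ≤ 1 := by rw [abs_of_pos hx0]; exact hx1
    rw [Real.norm_eq_abs, hκ n hn0]
    calc abs (1 / Real.sqrt (ρ ^ 2 + (x + n) ^ 2) - 1 / |(n : ℝ)|)
        ≤ (2 + 3 * |x|) / (n : ℝ) ^ 2 :=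
          aux_bound ρ x hρ n (by linarith) (by nlinarith [abs_nonneg x, sq_abs x])
      _ ≤ 5 * (1 / (n : ℝ) ^ 2) := by
          rw [mul_one_div]
          apply div_le_div_of_nonneg_right ?_ (by positivity)
          linarith
  have hint : IntegrableOn (fun x : ℝ => ‖1 / Real.sqrt (ρ ^ 2 + (x + n) ^ 2) - κ n‖)
      (Set.Ioc (0:ℝ) 1) volume :=
    ((((aux_cont1 ρ hρ).comp (by continuity)).sub continuous_const).norm).integrableOn_Ioc
  have hnn : 0 ≤ ∫ x in Set.Ioc (0:ℝ) 1, ‖1 / Real.sqrt (ρ ^ 2 + (x + n) ^ 2) - κ n‖ :=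
    MeasureTheory.integral_nonneg (fun x => norm_nonneg _)
  rw [Real.norm_of_nonneg hnn]
  calc (∫ x in Set.Ioc (0:ℝ) 1, ‖1 / Real.sqrt (ρ ^ 2 + (x + n) ^ 2) - κ n‖)
      ≤ ∫ _x in Set.Ioc (0:ℝ) 1, 5 * (1 / (n : ℝ) ^ 2) :=
        MeasureTheory.setIntegral_mono_on hint
          ((MeasureTheory.integrableOn_const_iff).mpr (Or.inr (by simp [Real.volume_Ioc])))
          measurableSet_Ioc hbound
    _ = 5 * (1 / (n : ℝ) ^ 2) := by
        rw [MeasureTheory.setIntegral_const]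
        simp [Real.volume_Ioc]



lemma aux_tendsto_arsinh (ρ : ℝ) (hρ : 0 < ρ) :
    Tendsto (fun n : ℕ => Real.arsinh ((n : ℝ) / ρ) - Real.log n) atTop
      (𝓝 (Real.log (2 / ρ))) := by
  have hinv : Tendsto (fun n : ℕ => 1 / (n : ℝ) ^ 2) atTop (𝓝 0) := by
    simp only [one_div]
    exact (tendsto_pow_atTop two_ne_zero).comp tendsto_natCast_atTop_atTop |>.inv_tendsto_atTop
  have h0 : Tendsto (fun n : ℕ => 1 / (n : ℝ) ^ 2 + 1 / ρ ^ 2) atTop (𝓝 (0 + 1 / ρ ^ 2)) :=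
    hinv.add_const _
  have h1 : Tendsto (fun n : ℕ => 1 / ρ + Real.sqrt (1 / (n : ℝ) ^ 2 + 1 / ρ ^ 2)) atTop
      (𝓝 (2 / ρ)) := by
    have h2 := (Real.continuous_sqrt.tendsto _).comp h0
    have h3 : Real.sqrt (0 + 1 / ρ ^ 2) = 1 / ρ := by
      rw [zero_add, one_div, Real.sqrt_inv, Real.sqrt_sq hρ.le, one_div]
    rw [h3] at h2
    have := h2.const_add (1 / ρ)
    convert this using 2
    · rfl
    · ring
  have h2 := ((Real.continuousAt_log (by positivity : (2:ℝ) / ρ ≠ 0)).tendsto).comp h1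
  apply h2.congr'
  filter_upwards [eventually_ge_atTop 1] with n hn
  have hn0 : (0:ℝ) < n := by exact_mod_cast hn
  show Real.log (1 / ρ + Real.sqrt (1 / (n : ℝ) ^ 2 + 1 / ρ ^ 2))
      = Real.arsinh ((n : ℝ) / ρ) - Real.log n
  rw [Real.arsinh]
  have key : (n : ℝ) / ρ + Real.sqrt (1 + ((n : ℝ) / ρ) ^ 2)
      = (n : ℝ) * (1 / ρ + Real.sqrt (1 / (n : ℝ) ^ 2 + 1 / ρ ^ 2)) := by
    have : Real.sqrt (1 + ((n : ℝ) / ρ) ^ 2)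
        = (n : ℝ) * Real.sqrt (1 / (n : ℝ) ^ 2 + 1 / ρ ^ 2) := by
      rw [← Real.sqrt_sq hn0.le, ← Real.sqrt_mul (by positivity)]
      congr 1
      field_simp
      ring
      exact Real.sq_sqrt (by positivity)
    rw [this]
    ring
  rw [key, Real.log_mul (by positivity) (by positivity)]
  ring



lemma aux_harm_cast (N : ℕ) : (harmonic N : ℝ) = ∑ i ∈ range N, (1 : ℝ) / (i + 1) := by
  rw [harmonic, Rat.cast_sum]
  refine Finset.sum_congr rfl fun i _ => ?_
  push_cast
  rw [one_div]

lemma aux_hasSum (κ : ℤ → ℝ) (hκ0 : κ 0 = 0) (hκ : ∀ n : ℤ, n ≠ 0 → κ n = 1 / |(n : ℝ)|)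
    (ρ : ℝ) (hρ : 0 < ρ)
    (hsum : Summable (fun n : ℤ =>
      Real.arsinh (((n : ℝ) + 1) / ρ) - Real.arsinh ((n : ℝ) / ρ) - κ n)) :
    HasSum (fun n : ℤ => Real.arsinh (((n : ℝ) + 1) / ρ) - Real.arsinh ((n : ℝ) / ρ) - κ n)
      (-2 * Real.log (ρ / 2) - 2 * Real.eulerMascheroniConstant) := by
  set c : ℤ → ℝ := fun n =>
    Real.arsinh (((n : ℝ) + 1) / ρ) - Real.arsinh ((n : ℝ) / ρ) - κ n with hc
  set Fn : ℕ → ℝ := fun i => Real.arsinh ((i : ℝ) / ρ) with hFn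
  set L : ℝ := Real.log (2 / ρ) - Real.eulerMascheroniConstant with hL
  -- positive side
  have hc_nat : ∀ i : ℕ, c (i : ℤ) = Fn (i + 1) - Fn i - κ (i : ℤ) := by
    intro i
    simp only [hc, hFn]
    push_cast
    ring_nf
  have hps : ∀ N : ℕ, ∑ i ∈ range (N + 1), c (i : ℤ)
      = Fn (N + 1) - (harmonic N : ℝ) := by
    intro N
    have e1 : ∑ i ∈ range (N + 1), c (i : ℤ)
        = ∑ i ∈ range (N + 1), ((Fn (i + 1) - Fn i) - κ (i : ℤ)) :=
      Finset.sum_congr rfl fun i _ => hc_nat i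
    rw [e1, Finset.sum_sub_distrib, Finset.sum_range_sub (fun i => Fn i)]
    have e2 : ∑ i ∈ range (N + 1), κ (i : ℤ) = (harmonic N : ℝ) := by
      rw [Finset.sum_range_succ']
      have : ∀ i ∈ range N, κ (((i + 1 : ℕ) : ℤ)) = (1 : ℝ) / (i + 1) := by
        intro i _
        rw [hκ _ (by exact_mod_cast Nat.succ_ne_zero i)]
        congr 1
        rw [abs_of_pos (by positivity)]
        push_cast
        ring
      rw [Finset.sum_congr rfl this, aux_harm_cast N]
      simp [hκ0]
    rw [e2]
    have : Fn 0 = 0 := by simp [hFn]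
    rw [this]
    ring
  have hpos_summ : Summable (fun k : ℕ => c (k : ℤ)) :=
    hsum.comp_injective (fun a b h => by exact_mod_cast h)
  have hT : Tendsto (fun N : ℕ => ∑ i ∈ range (N + 1), c (i : ℤ)) atTop (𝓝 L) := by
    simp only [hps]
    have key : (fun N : ℕ => Fn (N + 1) - (harmonic N : ℝ))
        = fun N : ℕ => (Real.arsinh (((N + 1 : ℕ) : ℝ) / ρ) - Real.log ((N + 1 : ℕ) : ℝ))
          - ((harmonic N : ℝ) - Real.log ((N : ℝ) + 1)) := by
      funext N
      simp only [hFn]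
      push_cast
      ring
    rw [key, hL]
    apply Tendsto.sub
    · exact (aux_tendsto_arsinh ρ hρ).comp (tendsto_add_atTop_nat 1)
    · have := Real.tendsto_eulerMascheroniSeq
      apply this.congr
      intro n
      simp [Real.eulerMascheroniSeq]
  have hhs_pos : HasSum (fun k : ℕ => c (k : ℤ)) L :=
    (hpos_summ.hasSum_iff_tendsto_nat).mpr ((tendsto_add_atTop_iff_nat 1).mp hT)
  -- negative side
  have hc_neg : ∀ i : ℕ, c (-((i : ℤ) + 1)) = Fn (i + 1) - Fn i - 1 / ((i : ℝ) + 1) := by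
    intro i
    simp only [hc, hFn]
    have h1 : ((-((i : ℤ) + 1) : ℤ) : ℝ) = -((i : ℝ) + 1) := by push_cast; ring
    rw [h1, hκ _ (by omega)]
    rw [show (-((i : ℝ) + 1) + 1) = -((i : ℝ)) by ring]
    rw [show (-((i : ℝ)) / ρ) = -((i : ℝ) / ρ) by ring,
      show (-((i : ℝ) + 1) / ρ) = -(((i : ℝ) + 1) / ρ) by ring]
    rw [Real.arsinh_neg, Real.arsinh_neg, h1]
    rw [abs_of_neg (by push_cast; linarith [Nat.cast_nonneg (α := ℝ) i] : -((i : ℝ) + 1) < 0)]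
    push_cast
    ring
  have hns : ∀ N : ℕ, ∑ i ∈ range N, c (-((i : ℤ) + 1))
      = Fn N - (harmonic N : ℝ) := by
    intro N
    have e1 : ∑ i ∈ range N, c (-((i : ℤ) + 1))
        = ∑ i ∈ range N, ((Fn (i + 1) - Fn i) - 1 / ((i : ℝ) + 1)) :=
      Finset.sum_congr rfl fun i _ => hc_neg i
    rw [e1, Finset.sum_sub_distrib, Finset.sum_range_sub (fun i => Fn i), aux_harm_cast N]
    have : Fn 0 = 0 := by simp [hFn]
    rw [this]
    ring
  have hneg_summ : Summable (fun k : ℕ => c (-((k : ℤ) + 1))) :=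
    hsum.comp_injective (fun a b h => by omega)
  have hTn : Tendsto (fun N : ℕ => ∑ i ∈ range N, c (-((i : ℤ) + 1))) atTop (𝓝 L) := by
    simp only [hns]
    have key : (fun N : ℕ => Fn N - (harmonic N : ℝ))
        = fun N : ℕ => (Real.arsinh ((N : ℝ) / ρ) - Real.log (N : ℝ))
          - ((harmonic N : ℝ) - Real.log (N : ℝ)) := by
      funext N
      simp only [hFn]
      ring
    rw [key, hL]
    exact (aux_tendsto_arsinh ρ hρ).sub Real.tendsto_harmonic_sub_log
  have hhs_neg : HasSum (fun k : ℕ => c (-((k : ℤ) + 1))) L :=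
    (hneg_summ.hasSum_iff_tendsto_nat).mpr hTn
  have htot := hhs_pos.of_nat_of_neg_add_one hhs_neg
  have hlog : Real.log (2 / ρ) = -Real.log (ρ / 2) := by
    rw [Real.log_div two_ne_zero hρ.ne', Real.log_div hρ.ne' two_ne_zero]
    ring
  have : L + L = -2 * Real.log (ρ / 2) - 2 * Real.eulerMascheroniConstant := by
    rw [hL, hlog]; ring
  rwa [this] at htot


/-- the regularized series `Σ_{n∈ℤ}[(ρ² + (x+n)²)^{−1/2} − κ(n)]`
converges absolutely for every `x`, and its integral over `x ∈ [0,1]` equals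
`−2·ln(ρ/2) − 2γ`, `γ` the Euler–Mascheroni constant. -/
theorem stmt10 (κ : ℤ → ℝ) (hκ0 : κ 0 = 0) (hκ : ∀ n : ℤ, n ≠ 0 → κ n = 1 / |(n : ℝ)|)
    (ρ : ℝ) (hρ : 0 < ρ) :
    (∀ x : ℝ, Summable (fun n : ℤ => |1 / Real.sqrt (ρ ^ 2 + (x + n) ^ 2) - κ n|))
    ∧ (∫ x in (0 : ℝ)..1, (∑' n : ℤ, (1 / Real.sqrt (ρ ^ 2 + (x + n) ^ 2) - κ n)))
        = -2 * Real.log (ρ / 2) - 2 * Real.eulerMascheroniConstant := by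
  refine ⟨fun x => aux_summable κ hκ ρ hρ x, ?_⟩
  have hInt : ∀ n : ℤ, Integrable (fun x : ℝ => 1 / Real.sqrt (ρ ^ 2 + (x + n) ^ 2) - κ n)
      (volume.restrict (Set.Ioc (0:ℝ) 1)) := aux_integrable κ ρ hρ
  have hSum := aux_summable_int κ hκ ρ hρ
  have hsumc : Summable (fun n : ℤ =>
      Real.arsinh (((n : ℝ) + 1) / ρ) - Real.arsinh ((n : ℝ) / ρ) - κ n) := by
    apply Summable.of_norm_bounded hSum
    intro n
    rw [← aux_integral κ ρ hρ n]
    exact norm_integral_le_integral_norm _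
  have hhs := aux_hasSum κ hκ0 hκ ρ hρ hsumc
  rw [intervalIntegral.integral_of_le zero_le_one,
    ← MeasureTheory.integral_tsum_of_summable_integral_norm hInt hSum,
    tsum_congr (fun n => aux_integral κ ρ hρ n)]
  exact hhs.tsum_eq
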